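/- Let H₁, H₂ be separable complex Hilbert spaces, H = H₁ ⊗ H₂, and (X, μ) = (X₁ × X₂, μ₁ ⊗ μ₂) the product of measure spaces with σ-finite positive measures. If F = F₁ ⊗ F₂ : X → H is a continuous frame for H with respect to (X, μ) with frame bounds A and B, then F₁ is a continuous frame for H₁ with respect to (X₁, μ₁) with frame bounds A₁ = A / C_{F₂} and B₁ = B / D_{F₂}, where C_{F₂} = inf_{‖g‖_{H₂}=1} ∫_{X₂} |⟨g, F₂(x₂)⟩|² dμ₂(x₂) and D_{F₂} = sup_{‖g‖_{H₂}=1} ∫_{X₂} |⟨g, F₂(x₂)⟩|² dμ₂(x₂); and F₂ is a continuous frame for H₂ with respect to (X₂, μ₂) with frame bounds A₂ = A / C_{F₁} and B₂ = B / D_{F₁}, where C_{F₁} = inf_{‖f‖_{H₁}=1} ∫_{X₁} |⟨f, F₁(x₁)⟩|² dμ₁(x₁) and D_{F₁} = sup_{‖f‖_{H₁}=1} ∫_{X₁} |⟨f, F₁(x₁)⟩|² dμ₁(x₁). -/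

import Mathlib

open MeasureTheory ENNReal

noncomputable section

namespace ContFrame

variable {X : Type*} {H : Type*}

/-- The paper's inner product `⟨f, g⟩`: linear in the first argument and
conjugate-linear in the second (Mathlib's `inner` is conjugate-linear in the first). -/
def pinner [NormedAddCommGroup H] [InnerProductSpace ℂ H] (f g : H) : ℂ :=
  @inner ℂ _ _ g f

/-- `∫_X |⟨f, F x⟩|² dμ(x)`, as a lower integral. -/
def frameInt [MeasurableSpace X] [NormedAddCommGroup H] [InnerProductSpace ℂ H]
    (μ : Measure X) (F : X → H) (f : H) : ℝ≥0∞ :=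
  ∫⁻ x, (‖pinner f (F x)‖₊ : ℝ≥0∞) ^ 2 ∂μ

/-- `F` is weakly measurable: `x ↦ ⟨f, F x⟩` is μ-measurable for every `f`. -/
def WeaklyMeasurable [MeasurableSpace X] [NormedAddCommGroup H] [InnerProductSpace ℂ H]
    (μ : Measure X) (F : X → H) : Prop :=
  ∀ f : H, AEMeasurable (fun x => pinner f (F x)) μ

/-- `F` is a Bessel mapping for `H` w.r.t. `(X, μ)` with Bessel bound `B < ∞`. -/
def IsBesselMapping [MeasurableSpace X] [NormedAddCommGroup H] [InnerProductSpace ℂ H]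
    (μ : Measure X) (F : X → H) (B : ℝ≥0∞) : Prop :=
  B < ⊤ ∧ WeaklyMeasurable μ F ∧
    ∀ f : H, frameInt μ F f ≤ B * (‖f‖₊ : ℝ≥0∞) ^ 2

/-- `F` is a continuous frame for `H` w.r.t. `(X, μ)` with frame bounds `0 < A ≤ B < ∞`:
`A ‖f‖² ≤ ∫_X |⟨f, F x⟩|² dμ(x) ≤ B ‖f‖²` for all `f ∈ H`. -/
def IsContinuousFrame [MeasurableSpace X] [NormedAddCommGroup H] [InnerProductSpace ℂ H]
    (μ : Measure X) (F : X → H) (A B : ℝ≥0∞) : Prop :=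
  0 < A ∧ A ≤ B ∧ B < ⊤ ∧ WeaklyMeasurable μ F ∧
    ∀ f : H, A * (‖f‖₊ : ℝ≥0∞) ^ 2 ≤ frameInt μ F f ∧
      frameInt μ F f ≤ B * (‖f‖₊ : ℝ≥0∞) ^ 2

/-- A realization of the Hilbert tensor product `H = H₁ ⊗ H₂`: a bilinear map
`tmul` whose simple tensors satisfy `⟪a⊗b, c⊗d⟫ = ⟪a,c⟫⟪b,d⟫` and span a dense subspace. -/
structure HilbertTensorProduct (H₁ H₂ H : Type*)
    [NormedAddCommGroup H₁] [InnerProductSpace ℂ H₁]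
    [NormedAddCommGroup H₂] [InnerProductSpace ℂ H₂]
    [NormedAddCommGroup H] [InnerProductSpace ℂ H] where
  tmul : H₁ →ₗ[ℂ] H₂ →ₗ[ℂ] H
  inner_tmul : ∀ (a c : H₁) (b d : H₂),
    (inner ℂ (tmul a b) (tmul c d) : ℂ) = (inner ℂ a c : ℂ) * (inner ℂ b d : ℂ)
  dense_span : Dense (↑(Submodule.span ℂ {z : H | ∃ a b, z = tmul a b}) : Set H)

-- auxiliary one-sided lemma
theorem aux {X₁ X₂ : Type*} [MeasurableSpace X₁] [MeasurableSpace X₂]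
    {H₁ H₂ H : Type*}
    [NormedAddCommGroup H₁] [InnerProductSpace ℂ H₁] [Nontrivial H₁]
    [NormedAddCommGroup H₂] [InnerProductSpace ℂ H₂] [Nontrivial H₂]
    [NormedAddCommGroup H] [InnerProductSpace ℂ H]
    (μ₁ : Measure X₁) (μ₂ : Measure X₂) [SigmaFinite μ₁] [SigmaFinite μ₂]
    (tp : HilbertTensorProduct H₁ H₂ H)
    (F₁ : X₁ → H₁) (F₂ : X₂ → H₂) (A B : ℝ≥0∞)
    (hF : IsContinuousFrame (μ₁.prod μ₂)
      (fun x : X₁ × X₂ => tp.tmul (F₁ x.1) (F₂ x.2)) A B) :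
    IsContinuousFrame μ₁ F₁
        (A / ⨅ (g : H₂) (_ : ‖g‖ = 1), frameInt μ₂ F₂ g)
        (B / ⨆ (g : H₂) (_ : ‖g‖ = 1), frameInt μ₂ F₂ g) := by
  obtain ⟨hA, hAB, hB, hW, hbd⟩ := hF
  have hpin : ∀ (f a : H₁) (g b : H₂),
      pinner (tp.tmul f g) (tp.tmul a b) = pinner f a * pinner g b := by
    intro f a g b
    simp only [pinner, tp.inner_tmul]
  have hnorm : ∀ (a : H₁) (b : H₂), ‖tp.tmul a b‖ = ‖a‖ * ‖b‖ := by
    intro a b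
    have h := tp.inner_tmul a a b b
    rw [inner_self_eq_norm_sq_to_K, inner_self_eq_norm_sq_to_K,
      inner_self_eq_norm_sq_to_K] at h
    have h2 : (‖tp.tmul a b‖ : ℝ) ^ 2 = (‖a‖ * ‖b‖) ^ 2 := by
      have h' : ((‖tp.tmul a b‖ ^ 2 : ℝ) : ℂ) = (((‖a‖ * ‖b‖) ^ 2 : ℝ) : ℂ) := by
        rw [mul_pow]
        exact_mod_cast h
      exact_mod_cast h'
    nlinarith [norm_nonneg (tp.tmul a b), norm_nonneg a, norm_nonneg b,
      mul_nonneg (norm_nonneg a) (norm_nonneg b)]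
  have hnn : ∀ (a : H₁) (b : H₂), (‖tp.tmul a b‖₊ : ℝ≥0∞) = (‖a‖₊ : ℝ≥0∞) * ‖b‖₊ := by
    intro a b
    rw [← ENNReal.coe_mul]
    congr 1
    apply NNReal.coe_injective
    push_cast
    exact hnorm a b
  have hunit1 : ∀ f : H₁, ‖f‖ = 1 → (‖f‖₊ : ℝ≥0∞) = 1 := by
    intro f hf
    norm_cast
    apply NNReal.coe_injective
    push_cast
    exact hf
  have hunit2 : ∀ g : H₂, ‖g‖ = 1 → (‖g‖₊ : ℝ≥0∞) = 1 := by
    intro g hg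
    norm_cast
    apply NNReal.coe_injective
    push_cast
    exact hg
  -- unit vectors
  obtain ⟨v₁, hv₁⟩ := exists_ne (0 : H₁)
  obtain ⟨v₂, hv₂⟩ := exists_ne (0 : H₂)
  obtain ⟨f₀, hf₀⟩ : ∃ f : H₁, ‖f‖ = 1 :=
    ⟨‖v₁‖⁻¹ • v₁, by
      rw [norm_smul, norm_inv, norm_norm, inv_mul_cancel₀ (norm_ne_zero_iff.mpr hv₁)]⟩
  obtain ⟨g₀, hg₀⟩ : ∃ g : H₂, ‖g‖ = 1 :=
    ⟨‖v₂‖⁻¹ • v₂, by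
      rw [norm_smul, norm_inv, norm_norm, inv_mul_cancel₀ (norm_ne_zero_iff.mpr hv₂)]⟩
  -- integrand factorization
  have hInt : ∀ (f : H₁) (g : H₂) (x : X₁ × X₂),
      (‖pinner (tp.tmul f g) (tp.tmul (F₁ x.1) (F₂ x.2))‖₊ : ℝ≥0∞) ^ 2
        = (‖pinner f (F₁ x.1)‖₊ : ℝ≥0∞) ^ 2 * (‖pinner g (F₂ x.2)‖₊ : ℝ≥0∞) ^ 2 := by
    intro f g x
    rw [hpin, ← mul_pow, ← ENNReal.coe_mul, ← nnnorm_mul]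
  -- product measurability
  have hWprod : ∀ (f : H₁) (g : H₂),
      AEMeasurable (fun x : X₁ × X₂ => pinner f (F₁ x.1) * pinner g (F₂ x.2)) (μ₁.prod μ₂) := by
    intro f g
    have h := hW (tp.tmul f g)
    simp only [hpin] at h
    exact h
  -- the frame integral of a simple tensor vanishes if one factor vanishes a.e.
  have hvan : ∀ (f : H₁) (g : H₂), (∀ᵐ x ∂(μ₁.prod μ₂), pinner f (F₁ x.1) * pinner g (F₂ x.2) = 0) →
      frameInt (μ₁.prod μ₂) (fun x : X₁ × X₂ => tp.tmul (F₁ x.1) (F₂ x.2)) (tp.tmul f g) = 0 := by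
    intro f g hz
    rw [frameInt]
    have heq : (fun x : X₁ × X₂ =>
          (‖pinner (tp.tmul f g) (tp.tmul (F₁ x.1) (F₂ x.2))‖₊ : ℝ≥0∞) ^ 2)
        =ᵐ[μ₁.prod μ₂] fun _ => 0 := by
      filter_upwards [hz] with x hx
      rw [hpin, hx]
      simp
    rw [lintegral_congr_ae heq, lintegral_zero]
  have hposint : ∀ (f : H₁) (g : H₂), ‖f‖ = 1 → ‖g‖ = 1 →
      frameInt (μ₁.prod μ₂) (fun x : X₁ × X₂ => tp.tmul (F₁ x.1) (F₂ x.2)) (tp.tmul f g) ≠ 0 := by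
    intro f g hf hg h0
    have hb := (hbd (tp.tmul f g)).1
    rw [h0] at hb
    have hone : (‖tp.tmul f g‖₊ : ℝ≥0∞) ^ 2 = 1 := by
      rw [hnn, hunit1 f hf, hunit2 g hg, one_mul, one_pow]
    rw [hone, mul_one] at hb
    exact hA.ne' (le_antisymm hb zero_le)
  -- non-vanishing
  have hne2 : ∀ g : H₂, ‖g‖ = 1 → ¬ (∀ᵐ x₂ ∂μ₂, pinner g (F₂ x₂) = 0) := by
    intro g hg hz
    refine hposint f₀ g hf₀ hg (hvan f₀ g ?_)
    filter_upwards [Measure.quasiMeasurePreserving_snd.ae hz] with x hx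
    rw [hx, mul_zero]
  have hne1 : ∀ f : H₁, ‖f‖ = 1 → ¬ (∀ᵐ x₁ ∂μ₁, pinner f (F₁ x₁) = 0) := by
    intro f hf hz
    refine hposint f g₀ hf hg₀ (hvan f g₀ ?_)
    filter_upwards [Measure.quasiMeasurePreserving_fst.ae hz] with x hx
    rw [hx, zero_mul]
  -- a.e. sections are measurable
  have hsec2 : ∀ (f : H₁) (g : H₂), ∀ᵐ x₂ ∂μ₂,
      AEMeasurable (fun x₁ => pinner f (F₁ x₁) * pinner g (F₂ x₂)) μ₁ := by
    intro f g
    obtain ⟨φm, hφm, hφe⟩ := hWprod f g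
    have hφe' := (Measure.measurePreserving_swap (μ := μ₂) (ν := μ₁)).quasiMeasurePreserving.ae_eq hφe
    have h2 := Measure.ae_ae_of_ae_prod (μ := μ₂) (ν := μ₁) hφe'
    filter_upwards [h2] with x₂ hx₂
    exact ⟨fun x₁ => φm (x₁, x₂), hφm.comp measurable_prodMk_right, hx₂⟩
  have hsec1 : ∀ (f : H₁) (g : H₂), ∀ᵐ x₁ ∂μ₁,
      AEMeasurable (fun x₂ => pinner f (F₁ x₁) * pinner g (F₂ x₂)) μ₂ := by
    intro f g
    obtain ⟨φm, hφm, hφe⟩ := hWprod f g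
    have h2 := Measure.ae_ae_of_ae_prod (μ := μ₁) (ν := μ₂) hφe
    filter_upwards [h2] with x₁ hx₁
    exact ⟨fun x₂ => φm (x₁, x₂), hφm.comp measurable_prodMk_left, hx₁⟩
  -- weak measurability of the factors
  have hW1 : WeaklyMeasurable μ₁ F₁ := by
    intro f
    have hx : ∃ x₂, AEMeasurable (fun x₁ => pinner f (F₁ x₁) * pinner g₀ (F₂ x₂)) μ₁
        ∧ pinner g₀ (F₂ x₂) ≠ 0 := by
      by_contra hcon
      push_neg at hcon
      refine hne2 g₀ hg₀ ?_
      filter_upwards [hsec2 f g₀] with x₂ hx₂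
      exact hcon x₂ hx₂
    obtain ⟨x₂, hm, hc⟩ := hx
    have heq : (fun x₁ => pinner f (F₁ x₁))
        = fun x₁ => (pinner f (F₁ x₁) * pinner g₀ (F₂ x₂)) * (pinner g₀ (F₂ x₂))⁻¹ := by
      funext x₁
      rw [mul_assoc, mul_inv_cancel₀ hc, mul_one]
    rw [heq]
    exact hm.mul_const _
  have hW2 : WeaklyMeasurable μ₂ F₂ := by
    intro g
    have hx : ∃ x₁, AEMeasurable (fun x₂ => pinner f₀ (F₁ x₁) * pinner g (F₂ x₂)) μ₂
        ∧ pinner f₀ (F₁ x₁) ≠ 0 := by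
      by_contra hcon
      push_neg at hcon
      refine hne1 f₀ hf₀ ?_
      filter_upwards [hsec1 f₀ g] with x₁ hx₁
      exact hcon x₁ hx₁
    obtain ⟨x₁, hm, hc⟩ := hx
    have heq : (fun x₂ => pinner g (F₂ x₂))
        = fun x₂ => ((pinner f₀ (F₁ x₁) * pinner g (F₂ x₂)) * (pinner f₀ (F₁ x₁))⁻¹) := by
      funext x₂
      rw [mul_comm (pinner f₀ (F₁ x₁)), mul_assoc, mul_inv_cancel₀ hc, mul_one]
    rw [heq]
    exact hm.mul_const _
  -- the product formula
  have hJ : ∀ (f : H₁) (g : H₂),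
      frameInt (μ₁.prod μ₂) (fun x : X₁ × X₂ => tp.tmul (F₁ x.1) (F₂ x.2)) (tp.tmul f g)
        = frameInt μ₁ F₁ f * frameInt μ₂ F₂ g := by
    intro f g
    have h1 : AEMeasurable (fun x₁ => (‖pinner f (F₁ x₁)‖₊ : ℝ≥0∞) ^ 2) μ₁ :=
      (AEMeasurable.enorm (hW1 f)).pow_const 2
    have h2 : AEMeasurable (fun x₂ => (‖pinner g (F₂ x₂)‖₊ : ℝ≥0∞) ^ 2) μ₂ :=
      (AEMeasurable.enorm (hW2 g)).pow_const 2
    calc frameInt (μ₁.prod μ₂) (fun x : X₁ × X₂ => tp.tmul (F₁ x.1) (F₂ x.2)) (tp.tmul f g)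
        = ∫⁻ x, (‖pinner f (F₁ x.1)‖₊ : ℝ≥0∞) ^ 2 * (‖pinner g (F₂ x.2)‖₊ : ℝ≥0∞) ^ 2
            ∂(μ₁.prod μ₂) := lintegral_congr (hInt f g)
      _ = _ := lintegral_prod_mul h1 h2
  -- frame bounds for simple tensors
  have hprod : ∀ (f : H₁) (g : H₂), ‖g‖ = 1 →
      A * (‖f‖₊ : ℝ≥0∞) ^ 2 ≤ frameInt μ₁ F₁ f * frameInt μ₂ F₂ g
        ∧ frameInt μ₁ F₁ f * frameInt μ₂ F₂ g ≤ B * (‖f‖₊ : ℝ≥0∞) ^ 2 := by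
    intro f g hg
    have hb := hbd (tp.tmul f g)
    rw [hJ] at hb
    have hn : (‖tp.tmul f g‖₊ : ℝ≥0∞) ^ 2 = (‖f‖₊ : ℝ≥0∞) ^ 2 := by
      rw [hnn, hunit2 g hg, mul_one]
    rw [hn] at hb
    exact hb
  -- positivity / finiteness at unit vectors
  have hI1 : ∀ f : H₁, ‖f‖ = 1 → frameInt μ₁ F₁ f ≠ 0 ∧ frameInt μ₁ F₁ f ≠ ⊤ := by
    intro f hf
    have h := hprod f g₀ hg₀
    rw [hunit1 f hf, one_pow, mul_one, mul_one] at h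
    constructor
    · intro h0
      rw [h0, zero_mul] at h
      exact hA.ne' (le_antisymm h.1 zero_le)
    · intro ht
      have h2 : frameInt μ₂ F₂ g₀ ≠ 0 := by
        intro h0
        rw [h0, mul_zero] at h
        exact hA.ne' (le_antisymm h.1 zero_le)
      rw [ht, ENNReal.top_mul h2] at h
      exact hB.ne (top_le_iff.mp h.2)
  have hI2 : ∀ g : H₂, ‖g‖ = 1 → frameInt μ₂ F₂ g ≠ 0 ∧ frameInt μ₂ F₂ g ≠ ⊤ := by
    intro g hg
    have h := hprod f₀ g hg
    rw [hunit1 f₀ hf₀, one_pow, mul_one, mul_one] at h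
    constructor
    · intro h0
      rw [h0, mul_zero] at h
      exact hA.ne' (le_antisymm h.1 zero_le)
    · intro ht
      have h2 : frameInt μ₁ F₁ f₀ ≠ 0 := by
        intro h0
        rw [h0, zero_mul] at h
        exact hA.ne' (le_antisymm h.1 zero_le)
      rw [ht, ENNReal.mul_top h2] at h
      exact hB.ne (top_le_iff.mp h.2)
  have hfin1 : ∀ f : H₁, frameInt μ₁ F₁ f ≠ ⊤ := by
    intro f ht
    have h := (hprod f g₀ hg₀).2
    rw [ht, ENNReal.top_mul (hI2 g₀ hg₀).1] at h
    exact ENNReal.mul_ne_top hB.ne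
      (ENNReal.pow_ne_top ENNReal.coe_ne_top) (top_le_iff.mp h)
  set C := ⨅ (g : H₂) (_ : ‖g‖ = 1), frameInt μ₂ F₂ g with hCdef
  set D := ⨆ (g : H₂) (_ : ‖g‖ = 1), frameInt μ₂ F₂ g with hDdef
  have hCge : A / frameInt μ₁ F₁ f₀ ≤ C := by
    refine le_iInf₂ fun g hg => ?_
    rw [ENNReal.div_le_iff_le_mul (Or.inl (hI1 f₀ hf₀).1) (Or.inl (hI1 f₀ hf₀).2), mul_comm]
    have h := (hprod f₀ g hg).1
    rwa [hunit1 f₀ hf₀, one_pow, mul_one] at h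
  have hCpos : 0 < C :=
    lt_of_lt_of_le (ENNReal.div_pos hA.ne' (hI1 f₀ hf₀).2) hCge
  have hCle : C ≤ frameInt μ₂ F₂ g₀ := iInf₂_le (f := fun (g : H₂) (_ : ‖g‖ = 1) => frameInt μ₂ F₂ g) g₀ hg₀
  have hCtop : C ≠ ⊤ :=
    (lt_of_le_of_lt hCle (lt_top_iff_ne_top.mpr (hI2 g₀ hg₀).2)).ne
  have hDge : frameInt μ₂ F₂ g₀ ≤ D := le_iSup₂ (f := fun (g : H₂) (_ : ‖g‖ = 1) => frameInt μ₂ F₂ g) g₀ hg₀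
  have hDpos : 0 < D :=
    lt_of_lt_of_le (pos_iff_ne_zero.mpr (hI2 g₀ hg₀).1) hDge
  have hDle : D ≤ B / frameInt μ₁ F₁ f₀ := by
    refine iSup₂_le fun g hg => ?_
    rw [ENNReal.le_div_iff_mul_le (Or.inl (hI1 f₀ hf₀).1) (Or.inl (hI1 f₀ hf₀).2), mul_comm]
    have h := (hprod f₀ g hg).2
    rwa [hunit1 f₀ hf₀, one_pow, mul_one] at h
  have hDtop : D ≠ ⊤ :=
    (lt_of_le_of_lt hDle (ENNReal.div_lt_top hB.ne (hI1 f₀ hf₀).1)).ne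
  -- the lower bound
  have hlow : ∀ f : H₁, (A / C) * (‖f‖₊ : ℝ≥0∞) ^ 2 ≤ frameInt μ₁ F₁ f := by
    intro f
    by_cases hf : f = 0
    · simp [hf]
    have hker : frameInt μ₁ F₁ f ≠ 0 := by
      intro h0
      have h := (hprod f g₀ hg₀).1
      rw [h0, zero_mul] at h
      have h1 : A * (‖f‖₊ : ℝ≥0∞) ^ 2 = 0 := le_antisymm h zero_le
      rcases mul_eq_zero.mp h1 with h' | h'
      · exact hA.ne' h'
      · refine hf ?_
        have : (‖f‖₊ : ℝ≥0∞) = 0 := by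
          exact pow_eq_zero_iff (by norm_num) |>.mp h'
        simpa using this
    have hdivC : A * (‖f‖₊ : ℝ≥0∞) ^ 2 / frameInt μ₁ F₁ f ≤ C := by
      refine le_iInf₂ fun g hg => ?_
      rw [ENNReal.div_le_iff_le_mul (Or.inl hker) (Or.inl (hfin1 f))]
      exact (hprod f g hg).1.trans_eq (mul_comm _ _)
    have h2 : A * (‖f‖₊ : ℝ≥0∞) ^ 2 ≤ C * frameInt μ₁ F₁ f :=
      (ENNReal.div_le_iff_le_mul (Or.inl hker) (Or.inl (hfin1 f))).mp hdivC
    have h3 : A * (‖f‖₊ : ℝ≥0∞) ^ 2 / C ≤ frameInt μ₁ F₁ f := by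
      rw [ENNReal.div_le_iff_le_mul (Or.inl hCpos.ne') (Or.inl hCtop)]
      exact h2.trans_eq (mul_comm _ _)
    calc (A / C) * (‖f‖₊ : ℝ≥0∞) ^ 2
        = A * (‖f‖₊ : ℝ≥0∞) ^ 2 / C := by
          rw [div_eq_mul_inv, div_eq_mul_inv, mul_right_comm]
      _ ≤ _ := h3
  -- the upper bound
  have hup : ∀ f : H₁, frameInt μ₁ F₁ f ≤ (B / D) * (‖f‖₊ : ℝ≥0∞) ^ 2 := by
    intro f
    have h1 : frameInt μ₁ F₁ f * D ≤ B * (‖f‖₊ : ℝ≥0∞) ^ 2 := by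
      rw [hDdef, ENNReal.mul_iSup]
      refine iSup_le fun g => ?_
      rw [ENNReal.mul_iSup]
      exact iSup_le fun hg => (hprod f g hg).2
    have h2 : frameInt μ₁ F₁ f ≤ B * (‖f‖₊ : ℝ≥0∞) ^ 2 / D :=
      (ENNReal.le_div_iff_mul_le (Or.inl hDpos.ne') (Or.inl hDtop)).mpr h1
    calc frameInt μ₁ F₁ f ≤ B * (‖f‖₊ : ℝ≥0∞) ^ 2 / D := h2
      _ = (B / D) * (‖f‖₊ : ℝ≥0∞) ^ 2 := by
          rw [div_eq_mul_inv, div_eq_mul_inv, mul_right_comm]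
  refine ⟨ENNReal.div_pos hA.ne' hCtop, ?_,
    ENNReal.div_lt_top hB.ne hDpos.ne', hW1, fun f => ⟨hlow f, hup f⟩⟩
  have l := hlow f₀
  have u := hup f₀
  rw [hunit1 f₀ hf₀, one_pow, mul_one] at l u
  exact l.trans u

/-- If `F = F₁ ⊗ F₂` is a continuous frame for the tensor product
`H = H₁ ⊗ H₂` w.r.t. the product measure with frame bounds `A, B`, then `F₁` is a
continuous frame for `H₁` with frame bounds `A / C_{F₂}` and `B / D_{F₂}`, and `F₂`
is a continuous frame for `H₂` with frame bounds `A / C_{F₁}` and `B / D_{F₁}`, where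
`C, D` are the infimum resp. supremum of the frame integrals over unit vectors. -/
theorem tensor_frame_yields_component_frames
    {X₁ X₂ : Type*} [MeasurableSpace X₁] [MeasurableSpace X₂]
    {H₁ H₂ H : Type*}
    [NormedAddCommGroup H₁] [InnerProductSpace ℂ H₁] [CompleteSpace H₁]
      [TopologicalSpace.SeparableSpace H₁] [Nontrivial H₁]
    [NormedAddCommGroup H₂] [InnerProductSpace ℂ H₂] [CompleteSpace H₂]
      [TopologicalSpace.SeparableSpace H₂] [Nontrivial H₂]
    [NormedAddCommGroup H] [InnerProductSpace ℂ H] [CompleteSpace H]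
      [TopologicalSpace.SeparableSpace H]
    (μ₁ : Measure X₁) (μ₂ : Measure X₂) [SigmaFinite μ₁] [SigmaFinite μ₂]
    (tp : HilbertTensorProduct H₁ H₂ H)
    (F₁ : X₁ → H₁) (F₂ : X₂ → H₂) (A B : ℝ≥0∞)
    (hF : IsContinuousFrame (μ₁.prod μ₂)
      (fun x : X₁ × X₂ => tp.tmul (F₁ x.1) (F₂ x.2)) A B) :
    IsContinuousFrame μ₁ F₁
        (A / ⨅ (g : H₂) (_ : ‖g‖ = 1), frameInt μ₂ F₂ g)
        (B / ⨆ (g : H₂) (_ : ‖g‖ = 1), frameInt μ₂ F₂ g) ∧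
      IsContinuousFrame μ₂ F₂
        (A / ⨅ (f : H₁) (_ : ‖f‖ = 1), frameInt μ₁ F₁ f)
        (B / ⨆ (f : H₁) (_ : ‖f‖ = 1), frameInt μ₁ F₁ f) := by
  constructor
  · exact aux μ₁ μ₂ tp F₁ F₂ A B hF
  · -- swap the tensor structure and the measures
    have hswap : IsContinuousFrame (μ₂.prod μ₁)
        (fun x : X₂ × X₁ => tp.tmul (F₁ x.2) (F₂ x.1)) A B := by
      obtain ⟨hA, hAB, hB, hW, hbd⟩ := hF
      have hmap : (μ₂.prod μ₁).map ((MeasurableEquiv.prodComm : X₂ × X₁ ≃ᵐ X₁ × X₂)) = μ₁.prod μ₂ := by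
        have he : ⇑((MeasurableEquiv.prodComm : X₂ × X₁ ≃ᵐ X₁ × X₂)) = Prod.swap := rfl
        rw [he, Measure.prod_swap]
      have hint : ∀ h : H,
          frameInt (μ₁.prod μ₂) (fun x : X₁ × X₂ => tp.tmul (F₁ x.1) (F₂ x.2)) h
            = frameInt (μ₂.prod μ₁) (fun x : X₂ × X₁ => tp.tmul (F₁ x.2) (F₂ x.1)) h := by
        intro h
        rw [frameInt, frameInt, ← hmap,
          lintegral_map_equiv
            (fun x : X₁ × X₂ =>
              (‖pinner h (tp.tmul (F₁ x.1) (F₂ x.2))‖₊ : ℝ≥0∞) ^ 2)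
            ((MeasurableEquiv.prodComm : X₂ × X₁ ≃ᵐ X₁ × X₂))]
        rfl
      refine ⟨hA, hAB, hB, ?_, ?_⟩
      · intro h
        have h1 := hW h
        rw [← hmap] at h1
        exact (aemeasurable_map_equiv_iff ((MeasurableEquiv.prodComm : X₂ × X₁ ≃ᵐ X₁ × X₂))).1 h1
      · intro h
        rw [← hint]
        exact hbd h
    exact aux μ₂ μ₁
      { tmul := tp.tmul.flip
        inner_tmul := fun a c b d => by
          simp only [LinearMap.flip_apply, tp.inner_tmul]
          ring
        dense_span := by
          have hs : {z : H | ∃ a b, z = tp.tmul.flip a b}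
              = {z : H | ∃ a b, z = tp.tmul a b} := by
            ext z
            constructor
            · rintro ⟨a, b, rfl⟩
              exact ⟨b, a, rfl⟩
            · rintro ⟨a, b, rfl⟩
              exact ⟨b, a, rfl⟩
          rw [hs]
          exact tp.dense_span }
      F₂ F₁ A B hswap


end ContFrame
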